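/- Let F be a subgraph of a triangle-free graph with r edges. The optimal 1-means cost of the associated point set (one point x_e = x_i + x_j ∈ {0,1}^n per edge e = (i,j)) equals ∑_v d_F(v)·(1 − d_F(v)/r), where the optimal 1-means cost is ∑_e ‖x_e − μ‖² with μ the centroid of the points. -/
import Mathlib


/-- The point `x_e = x_i + x_j ∈ {0,1}^V ⊆ ℝ^V` associated to an edge `e = (i,j)`. -/
noncomputable def edgePoint {V : Type*} [DecidableEq V] (e : Sym2 V) : EuclideanSpace ℝ V :=
  (WithLp.equiv 2 (V → ℝ)).symm (fun v => if v ∈ e then 1 else 0)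

theorem stmt17 {V : Type*} [Fintype V] [DecidableEq V] (F : SimpleGraph V)
    [DecidableRel F.Adj] (htf : F.CliqueFree 3) (r : ℕ) (hr : F.edgeFinset.card = r) :
    ∑ e ∈ F.edgeFinset,
        ‖edgePoint e - (r : ℝ)⁻¹ • ∑ f ∈ F.edgeFinset, edgePoint f‖ ^ 2 =
      ∑ v : V, (F.degree v : ℝ) * (1 - (F.degree v : ℝ) / (r : ℝ)) := by
  classical
  have hdeg : ∀ v : V, ∑ f ∈ F.edgeFinset, (if v ∈ f then (1:ℝ) else 0)
      = (F.degree v : ℝ) := by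
    intro v
    rw [Finset.sum_boole]
    rw [← SimpleGraph.incidenceFinset_eq_filter, SimpleGraph.card_incidenceFinset_eq_degree]
  have hnorm : ∀ x : EuclideanSpace ℝ V, ‖x‖ ^ 2 = ∑ v, (x v) ^ 2 := by
    intro x
    rw [EuclideanSpace.norm_eq, Real.sq_sqrt (by positivity)]
    simp [sq_abs]
  have hcoord : ∀ (e : Sym2 V) (v : V),
      ((edgePoint e - (r : ℝ)⁻¹ • ∑ f ∈ F.edgeFinset, edgePoint f : EuclideanSpace ℝ V)) v
      = (if v ∈ e then (1:ℝ) else 0) - (r : ℝ)⁻¹ * (F.degree v : ℝ) := by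
    intro e v
    have hsum : ((∑ f ∈ F.edgeFinset, edgePoint f : EuclideanSpace ℝ V)) v
        = ∑ f ∈ F.edgeFinset, (if v ∈ f then (1:ℝ) else 0) := by
      induction F.edgeFinset using Finset.cons_induction with
      | empty => simp
      | cons a s ha ih => rw [Finset.sum_cons, Finset.sum_cons, ← ih]; rfl
    rw [PiLp.sub_apply, PiLp.smul_apply, hsum, hdeg v, smul_eq_mul]
    rfl
  simp_rw [hnorm, hcoord]
  rw [Finset.sum_comm]
  refine Finset.sum_congr rfl fun v _ => ?_
  set d : ℝ := (F.degree v : ℝ) with hd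
  have expand : ∀ e ∈ F.edgeFinset,
      ((if v ∈ e then (1:ℝ) else 0) - (r : ℝ)⁻¹ * d) ^ 2
        = (if v ∈ e then (1:ℝ) else 0) - 2 * ((r : ℝ)⁻¹ * d) * (if v ∈ e then (1:ℝ) else 0)
          + ((r : ℝ)⁻¹ * d) ^ 2 := by
    intro e _
    by_cases h : v ∈ e <;> simp [h] <;> ring
  rw [Finset.sum_congr rfl expand]
  rw [Finset.sum_add_distrib, Finset.sum_sub_distrib, ← Finset.mul_sum, hdeg v,
    Finset.sum_const, hr, nsmul_eq_mul]
  rcases eq_or_ne r 0 with h0 | h0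
  · have : F.edgeFinset = ∅ := Finset.card_eq_zero.mp (by rw [hr, h0])
    have hd0 : F.degree v = 0 := by
      rw [← SimpleGraph.card_incidenceFinset_eq_degree, SimpleGraph.incidenceFinset_eq_filter,
        this]
      simp
    simp [h0, hd, hd0]
  · have : (r : ℝ) ≠ 0 := Nat.cast_ne_zero.mpr h0
    field_simp
    ring
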